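/- Let (ρ_k) be a positive sequence satisfying ρ_k = ρ_{k-1} + 1/D_k where D_k = λ_e + λ_w^{(1)}(1 + λ_e ρ_{k-1})² + λ_w^{(2)}(1 + ρ_{k-1}[λ_e + λ_w^{(1)}(1 + λ_e ρ_{k-1})²])², with λ_e, λ_w^{(1)}, λ_w^{(2)} > 0 and ρ_0 > 0. Then ρ_k / k^{1/7} → (7/(λ_e⁴ (λ_w^{(1)})² λ_w^{(2)}))^{1/7} as k → ∞. -/

import Mathlib

open Filter

set_option maxHeartbeats 1000000 in
/-- Three-agent word-of-mouth social learning: the public-belief precision grows like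
`k^{1/7}`, with `ρ_k / k^{1/7} → (7/(λ_e⁴ (λ_w⁽¹⁾)² λ_w⁽²⁾))^{1/7}`. -/
theorem three_agent_precision_rate
    (lam_e lam_w1 lam_w2 : ℝ) (hle : 0 < lam_e) (hlw1 : 0 < lam_w1) (hlw2 : 0 < lam_w2)
    (ρ : ℕ → ℝ) (hρ0 : 0 < ρ 0) (hρpos : ∀ k, 0 < ρ k)
    (hrec : ∀ k : ℕ, ρ (k + 1) = ρ k
      + 1 / (lam_e + lam_w1 * (1 + lam_e * ρ k) ^ 2
          + lam_w2 * (1 + ρ k * (lam_e + lam_w1 * (1 + lam_e * ρ k) ^ 2)) ^ 2)) :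
    Tendsto (fun k : ℕ => ρ k / (k : ℝ) ^ ((1 : ℝ) / 7)) atTop
      (nhds ((7 / (lam_e ^ 4 * lam_w1 ^ 2 * lam_w2)) ^ ((1 : ℝ) / 7))) := by
  set C : ℝ := lam_e ^ 4 * lam_w1 ^ 2 * lam_w2 with hC
  have hCpos : 0 < C := by positivity
  -- the denominator function
  set D : ℝ → ℝ := fun x => lam_e + lam_w1 * (1 + lam_e * x) ^ 2
      + lam_w2 * (1 + x * (lam_e + lam_w1 * (1 + lam_e * x) ^ 2)) ^ 2 with hD
  have hDpos : ∀ x : ℝ, 0 < D x := by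
    intro x
    have : 0 < lam_e + lam_w1 * (1 + lam_e * x) ^ 2
        + lam_w2 * (1 + x * (lam_e + lam_w1 * (1 + lam_e * x) ^ 2)) ^ 2 := by positivity
    simpa [hD] using this
  set ε : ℕ → ℝ := fun k => 1 / D (ρ k) with hε
  have hεpos : ∀ k, 0 < ε k := fun k => by
    simp only [hε]; positivity
  have hrec' : ∀ k, ρ (k + 1) = ρ k + ε k := fun k => by
    simpa [hε, hD] using hrec k
  have hmono : Monotone ρ := monotone_nat_of_le_succ fun k => by
    rw [hrec' k]; linarith [hεpos k]
  -- ρ tends to infinity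
  have htop : Tendsto ρ atTop atTop := by
    rcases tendsto_of_monotone hmono with h | ⟨l, hl⟩
    · exact h
    · exfalso
      have hcontD : Continuous D := by
        simp only [hD]; continuity
      have h1 : Tendsto (fun k => ε k) atTop (nhds (1 / D l)) := by
        have hDl : Tendsto (fun k => D (ρ k)) atTop (nhds (D l)) :=
          (hcontD.tendsto l).comp hl
        simpa [hε, one_div] using hDl.inv₀ (hDpos l).ne' 
      have h2 : Tendsto (fun k => ρ (k + 1) - ρ k) atTop (nhds 0) := by
        have := ((hl.comp (tendsto_add_atTop_nat 1)).sub hl)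
        simpa using this
      have h3 : Tendsto (fun k => ρ (k + 1) - ρ k) atTop (nhds (1 / D l)) := by
        refine h1.congr fun k => ?_
        rw [hrec' k]; ring
      have heq := tendsto_nhds_unique h2 h3
      have hpos : (0 : ℝ) < 1 / D l := by have := hDpos l; positivity
      linarith
  -- the rescaled polynomial g with g 0 = C and D x = g (1/x) * x^6 for x > 0
  set g : ℝ → ℝ := fun u => lam_e * u ^ 6 + lam_w1 * u ^ 4 * (u + lam_e) ^ 2
      + lam_w2 * (u ^ 3 + lam_e * u ^ 2 + lam_w1 * (u + lam_e) ^ 2) ^ 2 with hg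
  have hg0 : g 0 = C := by simp only [hg, hC]; ring
  have hgD : ∀ x : ℝ, 0 < x → D x = g x⁻¹ * x ^ 6 := by
    intro x hx
    simp only [hD, hg]
    field_simp
    ring
  have hcontg : Continuous g := by simp only [hg]; continuity
  have hinvρ : Tendsto (fun k => (ρ k)⁻¹) atTop (nhds 0) := htop.inv_tendsto_atTop
  have hgρ : Tendsto (fun k => g (ρ k)⁻¹) atTop (nhds C) := by
    rw [← hg0]; exact (hcontg.tendsto 0).comp hinvρ
  -- t k = ρ k ^ 6 * ε k → 1/C
  have hgρpos : ∀ k, 0 < g (ρ k)⁻¹ := by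
    intro k
    have hgeq : g (ρ k)⁻¹ = D (ρ k) / (ρ k) ^ 6 := by
      rw [hgD (ρ k) (hρpos k)]
      have h6 : ((ρ k) ^ 6 : ℝ) ≠ 0 := pow_ne_zero 6 (hρpos k).ne'
      rw [mul_div_assoc, div_self h6, mul_one]
    rw [hgeq]
    have hDk := hDpos (ρ k)
    have hk := hρpos k
    positivity
  have ht : Tendsto (fun k => ρ k ^ 6 * ε k) atTop (nhds (1 / C)) := by
    have h1 : Tendsto (fun k => (g (ρ k)⁻¹)⁻¹) atTop (nhds C⁻¹) :=
      hgρ.inv₀ (ne_of_gt hCpos)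
    rw [one_div]
    refine h1.congr fun k => ?_
    simp only [hε]
    rw [hgD (ρ k) (hρpos k)]
    have h6 : ((ρ k) ^ 6 : ℝ) ≠ 0 := pow_ne_zero 6 (hρpos k).ne'
    rw [one_div, mul_inv, mul_comm ((g (ρ k)⁻¹)⁻¹), ← mul_assoc,
      mul_inv_cancel₀ h6, one_mul]
  -- s k = ε k / ρ k → 0
  have hs : Tendsto (fun k => ε k / ρ k) atTop (nhds 0) := by
    have h7 : Tendsto (fun k => ρ k ^ 7) atTop atTop :=
      (tendsto_pow_atTop (n := 7) (by norm_num)).comp htop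
    have := (ht.div_atTop h7)
    refine this.congr fun k => ?_
    have hx := (hρpos k).ne'
    field_simp
  -- differences of a k = ρ k ^ 7 tend to 7/C
  set t : ℕ → ℝ := fun k => ρ k ^ 6 * ε k with htdef
  set s : ℕ → ℝ := fun k => ε k / ρ k with hsdef
  have hdiff : ∀ k, ρ (k+1) ^ 7 - ρ k ^ 7
      = 7 * t k + 21 * (t k * s k) + 35 * (t k * s k ^ 2) + 35 * (t k * s k ^ 3)
        + 21 * (t k * s k ^ 4) + 7 * (t k * s k ^ 5) + t k * s k ^ 6 := by
    intro k
    have hx := (hρpos k).ne'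
    have hbase : ∀ j : ℕ, s k ^ j = ε k ^ j / ρ k ^ j := by
      intro j; simp only [hsdef, div_pow]
    have e1 : t k * s k = ρ k ^ 5 * ε k ^ 2 := by
      simp only [htdef, hsdef]; field_simp
    have e2 : t k * s k ^ 2 = ρ k ^ 4 * ε k ^ 3 := by
      simp only [htdef, hbase]; field_simp
    have e3 : t k * s k ^ 3 = ρ k ^ 3 * ε k ^ 4 := by
      simp only [htdef, hbase]; field_simp
    have e4 : t k * s k ^ 4 = ρ k ^ 2 * ε k ^ 5 := by
      simp only [htdef, hbase]; field_simp
    have e5 : t k * s k ^ 5 = ρ k * ε k ^ 6 := by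
      simp only [htdef, hbase]; field_simp
    have e6 : t k * s k ^ 6 = ε k ^ 7 := by
      simp only [htdef, hbase]; field_simp
    rw [hrec' k, e1, e2, e3, e4, e5, e6]
    simp only [htdef]
    ring
  have hdlim : Tendsto (fun k => ρ (k+1) ^ 7 - ρ k ^ 7) atTop (nhds (7 / C)) := by
    have h0 : Tendsto s atTop (nhds 0) := hs
    have htt : Tendsto t atTop (nhds (1/C)) := ht
    have key : Tendsto (fun k => 7 * t k + 21 * (t k * s k) + 35 * (t k * s k ^ 2)
        + 35 * (t k * s k ^ 3) + 21 * (t k * s k ^ 4) + 7 * (t k * s k ^ 5)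
        + t k * s k ^ 6) atTop
        (nhds (7 * (1/C) + 21 * ((1/C) * 0) + 35 * ((1/C) * 0 ^ 2) + 35 * ((1/C) * 0 ^ 3)
          + 21 * ((1/C) * 0 ^ 4) + 7 * ((1/C) * 0 ^ 5) + (1/C) * 0 ^ 6)) := by
      exact ((((((htt.const_mul 7).add ((htt.mul h0).const_mul 21)).add
        ((htt.mul (h0.pow 2)).const_mul 35)).add ((htt.mul (h0.pow 3)).const_mul 35)).add
        ((htt.mul (h0.pow 4)).const_mul 21)).add ((htt.mul (h0.pow 5)).const_mul 7)).add
        (htt.mul (h0.pow 6))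
    have : (7 * (1/C) + 21 * ((1/C) * 0) + 35 * ((1/C) * 0 ^ 2) + 35 * ((1/C) * 0 ^ 3)
          + 21 * ((1/C) * 0 ^ 4) + 7 * ((1/C) * 0 ^ 5) + (1/C) * 0 ^ 6) = 7 / C := by ring
    rw [this] at key
    exact key.congr fun k => (hdiff k).symm
  -- Cesàro: ρ k ^ 7 / k → 7/C
  have hcesaro : Tendsto (fun n : ℕ => (n:ℝ)⁻¹ * ∑ i ∈ Finset.range n,
      (ρ (i+1) ^ 7 - ρ i ^ 7)) atTop (nhds (7 / C)) := hdlim.cesaro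
  have hsum : ∀ n : ℕ, ∑ i ∈ Finset.range n, (ρ (i+1) ^ 7 - ρ i ^ 7) = ρ n ^ 7 - ρ 0 ^ 7 :=
    fun n => Finset.sum_range_sub (fun i => ρ i ^ 7) n
  have hmain : Tendsto (fun n : ℕ => ρ n ^ 7 / (n : ℝ)) atTop (nhds (7 / C)) := by
    have h1 : Tendsto (fun n : ℕ => (n:ℝ)⁻¹ * (ρ n ^ 7 - ρ 0 ^ 7)) atTop (nhds (7 / C)) :=
      hcesaro.congr fun n => by rw [hsum n]
    have h2 : Tendsto (fun n : ℕ => (n:ℝ)⁻¹ * ρ 0 ^ 7) atTop (nhds 0) := by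
      simpa using (tendsto_inv_atTop_zero.comp tendsto_natCast_atTop_atTop).mul_const (ρ 0 ^ 7)
    have h3 := h1.add h2
    rw [add_zero] at h3
    exact h3.congr fun n => by ring
  -- conclude via x ↦ x^(1/7)
  have hfin : Tendsto (fun n : ℕ => (ρ n ^ 7 / (n : ℝ)) ^ ((1:ℝ)/7)) atTop
      (nhds ((7 / C) ^ ((1:ℝ)/7))) :=
    hmain.rpow_const (Or.inr (by norm_num))
  refine hfin.congr' ?_
  filter_upwards [eventually_gt_atTop 0] with n hn
  have hnpos : (0:ℝ) < (n:ℝ) := by exact_mod_cast hn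
  have hρn := hρpos n
  rw [Real.div_rpow (by positivity) hnpos.le]
  congr 1
  rw [← Real.rpow_natCast (ρ n) 7, ← Real.rpow_mul hρn.le]
  norm_num
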